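/- Let V ⊆ V' be an immediate extension of valuation rings with fraction fields K ⊆ K', and let (v_i)_{i<λ} be an algebraic pseudo convergent sequence in K which has a pseudo limit x ∈ V' algebraic over K but no pseudo limit in K. If h = Irr(x, K) (the minimal polynomial of x over K) lies in V[X], then val(h(v_i)) < val(h(v_j)) for all sufficiently large i < j < λ. -/

import Mathlib

open Polynomial

section ValuationDefs

variable {Γ : Type*} [AddCommGroup Γ] [LinearOrder Γ] [IsOrderedAddMonoid Γ] {K : Type*} [Field K]

/-- `val` is an (additive, Krull) valuation on the field `K` with values in
`WithTop Γ`: `val 0 = ⊤`, nonzero elements have values in `Γ`, `val` is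
multiplicative-to-additive and satisfies the ultrametric inequality.
The valuation ring is `{x | 0 ≤ val x}`. -/
def IsAddValuation (val : K → WithTop Γ) : Prop :=
  val 0 = ⊤ ∧ (∀ x : K, x ≠ 0 → val x ≠ ⊤) ∧
    (∀ x y : K, val (x * y) = val x + val y) ∧
    ∀ x y : K, min (val x) (val y) ≤ val (x + y)

/-- The valuation ring of the subfield `K₀` gives an immediate extension inside
the valued field `K`: the inclusion induces isomorphisms on value groups and on
residue fields. -/
def IsImmediate (val : K → WithTop Γ) (K₀ : Subfield K) : Prop :=
  (∀ x : K, x ≠ 0 → ∃ y ∈ K₀, val y = val x) ∧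
    ∀ x : K, val x = 0 → ∃ y ∈ K₀, 0 < val (x - y)

/-- `(v i)_{i < lam}` is a pseudo convergent sequence:
`val (v i - v i'') < val (v i' - v i'')` for `i < i' < i'' < lam`. -/
def PseudoConvergent (val : K → WithTop Γ) (lam : Ordinal) (v : Ordinal → K) : Prop :=
  ∀ i i' i'' : Ordinal, i < i' → i' < i'' → i'' < lam →
    val (v i - v i'') < val (v i' - v i'')

/-- `x` is a pseudo limit of `(v i)_{i < lam}`: `val (x - v i)` is strictly
increasing in `i`. -/
def IsPseudoLimit (val : K → WithTop Γ) (lam : Ordinal) (v : Ordinal → K) (x : K) : Prop :=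
  ∀ i i' : Ordinal, i < i' → i' < lam → val (x - v i) < val (x - v i')

/-- the polynomial `f` has all its coefficients in the valuation ring of the
subfield `K₀`, i.e. `f ∈ V[X]` where `V = K₀ ∩ {0 ≤ val}`. -/
def CoeffsIn (val : K → WithTop Γ) (K₀ : Subfield K) (f : Polynomial K) : Prop :=
  ∀ n : ℕ, f.coeff n ∈ K₀ ∧ 0 ≤ val (f.coeff n)

/-- the values of `f` along the sequence `v` are eventually strictly
increasing (witnessing that `v` is algebraic via `f`). -/
def EvIncreasing (val : K → WithTop Γ) (lam : Ordinal) (v : Ordinal → K)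
    (f : Polynomial K) : Prop :=
  ∃ ν : Ordinal, ν < lam ∧ ∀ i i' : Ordinal, ν < i → i < i' → i' < lam →
    val (f.eval (v i)) < val (f.eval (v i'))

end ValuationDefs

section AuxHelpers

variable {Γ : Type*} [AddCommGroup Γ] [LinearOrder Γ] [IsOrderedAddMonoid Γ] {K : Type*} [Field K]
  {val : K → WithTop Γ}

namespace IsAddValuation

theorem ne_top (h : IsAddValuation val) {a : K} (ha : a ≠ 0) : val a ≠ ⊤ := h.2.1 a ha

theorem map_one (h : IsAddValuation val) : val 1 = (0 : WithTop Γ) := by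
  have h1 := h.2.2.1 1 1
  rw [mul_one] at h1
  lift val 1 to Γ using h.ne_top one_ne_zero with b hb
  have hbb : b + b = b := by exact_mod_cast h1.symm
  have hb0 : b = 0 := by
    have : b + b = 0 + b := by rw [hbb, zero_add]
    exact add_right_cancel this
  exact_mod_cast hb0

theorem map_neg (h : IsAddValuation val) (a : K) : val (-a) = val a := by
  have hm1 : val (-1 : K) = 0 := by
    have h1 := h.2.2.1 (-1) (-1)
    rw [neg_mul_neg, one_mul, h.map_one] at h1
    lift val (-1 : K) to Γ using h.ne_top (by norm_num) with b hb
    have hbb : b + b = 0 := by exact_mod_cast h1.symm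
    have hb0 : b = 0 := by
      rcases lt_trichotomy b 0 with hb' | hb' | hb'
      · exact absurd (hbb ▸ add_lt_add hb' hb') (by simp)
      · exact hb'
      · exact absurd (hbb ▸ add_lt_add hb' hb') (by simp)
    exact_mod_cast hb0
  calc val (-a) = val ((-1) * a) := by ring_nf
  _ = val (-1 : K) + val a := h.2.2.1 _ _
  _ = val a := by rw [hm1, zero_add]

theorem map_pow (h : IsAddValuation val) (a : K) (n : ℕ) : val (a ^ n) = n • val a := by
  induction n with
  | zero => simpa using h.map_one
  | succ n ih => rw [pow_succ, h.2.2.1, ih, succ_nsmul]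

theorem map_add_left (h : IsAddValuation val) {b c : K} (hlt : val b < val c) :
    val (b + c) = val b := by
  have h1 : min (val b) (val c) ≤ val (b + c) := h.2.2.2 b c
  rw [min_eq_left hlt.le] at h1
  have h2 : min (val (b + c)) (val c) ≤ val b := by
    have := h.2.2.2 (b + c) (-c)
    rw [add_neg_cancel_right, h.map_neg] at this
    exact this
  rcases min_le_iff.mp h2 with h3 | h3
  · exact le_antisymm h3 h1
  · exact absurd h3 (not_le.mpr hlt)

theorem map_sum {ι : Type*} (h : IsAddValuation val) {s : Finset ι} {a : ι → K} {k0 : ι}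
    (hk0 : k0 ∈ s) (hne : a k0 ≠ 0)
    (hlt : ∀ k ∈ s, k ≠ k0 → val (a k0) < val (a k)) :
    val (∑ k ∈ s, a k) = val (a k0) := by
  classical
  have aux : ∀ t : Finset ι, (∀ k ∈ t, val (a k0) < val (a k)) →
      val (a k0) < val (∑ k ∈ t, a k) := by
    intro t
    induction t using Finset.cons_induction with
    | empty => intro _; rw [Finset.sum_empty, h.1]; exact lt_top_iff_ne_top.mpr (h.ne_top hne)
    | cons i t hi ih =>
      intro ht
      rw [Finset.sum_cons]
      refine lt_of_lt_of_le ?_ (h.2.2.2 _ _)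
      exact lt_min (ht i (Finset.mem_cons_self i t))
        (ih fun k hk => ht k (Finset.mem_cons_of_mem hk))
  rw [← Finset.insert_erase hk0, Finset.sum_insert (Finset.notMem_erase k0 s)]
  exact h.map_add_left (aux _ fun k hk =>
    hlt k (Finset.mem_of_mem_erase hk) (Finset.ne_of_mem_erase hk))

end IsAddValuation

theorem aux_nsmul_lt {a b : Γ} (hab : a < b) : ∀ n : ℕ, 0 < n → n • a < n • b := by
  intro n hn
  induction n with
  | zero => omega
  | succ m ih =>
    rcases Nat.eq_zero_or_pos m with hm | hm
    · subst hm; simpa using hab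
    · rw [succ_nsmul, succ_nsmul]; exact add_lt_add (ih hm) hab

theorem aux_nsmul_inj {a b : Γ} {n : ℕ} (hn : 0 < n) (hab : n • a = n • b) : a = b := by
  rcases lt_trichotomy a b with hc | hc | hc
  · exact absurd hab (aux_nsmul_lt hc n hn).ne
  · exact hc
  · exact absurd hab.symm (aux_nsmul_lt hc n hn).ne

theorem aux_coe_nsmul (n : ℕ) (a : Γ) : n • (a : WithTop Γ) = ((n • a : Γ) : WithTop Γ) := by
  induction n with
  | zero => simp
  | succ m ih => rw [succ_nsmul, succ_nsmul, ih]; norm_cast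

end AuxHelpers

theorem lemma_kap_one {Γ : Type*} [AddCommGroup Γ] [LinearOrder Γ] [IsOrderedAddMonoid Γ]
    {K' : Type*} [Field K'] (val : K' → WithTop Γ) (hval : IsAddValuation val)
    (Ksub : Subfield K') (himm : IsImmediate val Ksub)
    (lam : Ordinal) (hlam : Order.IsSuccLimit lam)
    (v : Ordinal → K') (hv : ∀ i : Ordinal, i < lam → v i ∈ Ksub)
    (hpc : PseudoConvergent val lam v)
    (x : K') (hx : 0 ≤ val x) (hlim : IsPseudoLimit val lam v x)
    (halg : ∃ f : Polynomial K', CoeffsIn val Ksub f ∧ EvIncreasing val lam v f)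
    (hnolim : ¬ ∃ y : K', y ∈ Ksub ∧ IsPseudoLimit val lam v y)
    (h : Polynomial K') (hmonic : h.Monic) (hroot : h.eval x = 0)
    (hcoeff : CoeffsIn val Ksub h)
    (hmin : ∀ q : Polynomial K', (∀ n : ℕ, q.coeff n ∈ Ksub) → q.Monic →
      q.eval x = 0 → h.natDegree ≤ q.natDegree) :
    ∃ ν : Ordinal, ν < lam ∧ ∀ i j : Ordinal, ν < i → i < j → j < lam →
      val (h.eval (v i)) < val (h.eval (v j)) := by
  classical
  have vmul := hval.2.2.1
  set d := h.natDegree with hd_def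
  have hd1 : 1 ≤ d := by
    by_contra hc
    push_neg at hc
    have hd0 : h.natDegree = 0 := by omega
    have : h = 1 := hmonic.natDegree_eq_zero.mp hd0
    rw [this] at hroot; simp at hroot
  set g := Polynomial.taylor x h with hg_def
  have hgd : g.natDegree = d := Polynomial.natDegree_taylor h x
  have hg0 : g.coeff 0 = 0 := by rw [hg_def, Polynomial.taylor_coeff_zero, hroot]
  have hgne : g ≠ 0 := by
    intro hgz
    have : h = 0 := by
      have h2 := congrArg (⇑(Polynomial.taylor (-x))) hgz
      rwa [hg_def, Polynomial.taylor_taylor, neg_add_cancel, Polynomial.taylor_zero,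
        map_zero] at h2
    exact hmonic.ne_zero this
  have hgdne : g.coeff d ≠ 0 := by
    rw [← hgd]; exact Polynomial.leadingCoeff_ne_zero.mpr hgne
  set S : Finset ℕ := (Finset.range (d + 1)).filter (fun k => g.coeff k ≠ 0 ∧ 1 ≤ k)
    with hS_def
  have hSmem : ∀ k, k ∈ S ↔ k < d + 1 ∧ g.coeff k ≠ 0 ∧ 1 ≤ k := by
    intro k; simp [hS_def, Finset.mem_filter, Finset.mem_range]
  have hdS : d ∈ S := (hSmem d).mpr ⟨by omega, hgdne, hd1⟩
  set γ : Ordinal → WithTop Γ := fun i => val (x - v i) with hγ_def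
  have hγmono : ∀ i j, i < j → j < lam → γ i < γ j := fun i j hij hj => hlim i j hij hj
  have hγtop : ∀ i, i < lam → γ i ≠ ⊤ := by
    intro i hi
    have hsucc : Order.succ i < lam := hlam.succ_lt hi
    exact (hγmono i (Order.succ i) (Order.lt_succ i) hsucc).ne_top
  have hγinj : ∀ i j, i < lam → j < lam → γ i = γ j → i = j := by
    intro i j hi hj hij
    rcases lt_trichotomy i j with hc | hc | hc
    · exact absurd hij (hγmono i j hc hj).ne
    · exact hc
    · exact absurd hij.symm (hγmono j i hc hi).ne
  have hvix : ∀ i, i < lam → v i - x ≠ 0 := by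
    intro i hi hz
    apply hγtop i hi
    rw [hγ_def]
    have : x - v i = 0 := by rw [← neg_sub]; rw [hz]; simp
    simp only [this]
    exact hval.1
  have hterm : ∀ (k : ℕ) (i : Ordinal), i < lam →
      val (g.coeff k * (v i - x) ^ k) = val (g.coeff k) + k • γ i := by
    intro k i hi
    rw [vmul, hval.map_pow]
    congr 2
    rw [← hval.map_neg (v i - x), neg_sub]
  set tval : ℕ → Ordinal → WithTop Γ := fun k i => val (g.coeff k) + k • γ i with ht_def
  have heval : ∀ i, i < lam → h.eval (v i) = ∑ k ∈ S, g.coeff k * (v i - x) ^ k := by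
    intro i hi
    have e1 : h.eval (v i) = g.eval (v i - x) :=
      (Polynomial.taylor_eval_sub x h (v i)).symm
    rw [e1, Polynomial.eval_eq_sum_range, hgd, hS_def]
    rw [Finset.sum_filter_of_ne]
    intro k _ hne
    constructor
    · intro hz; rw [hz, zero_mul] at hne; exact hne rfl
    · rcases Nat.eq_zero_or_pos k with h0 | h0
      · exfalso; rw [h0, hg0, zero_mul] at hne; exact hne rfl
      · exact h0
  -- tie uniqueness
  have key : ∀ k l : ℕ, k ≠ l → g.coeff k ≠ 0 → g.coeff l ≠ 0 →
      ∀ i j, i < lam → j < lam → tval k i = tval l i → tval k j = tval l j → i = j := by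
    have aux : ∀ k l : ℕ, k < l → g.coeff k ≠ 0 → g.coeff l ≠ 0 →
        ∀ i j, i < lam → j < lam → tval k i = tval l i → tval k j = tval l j → i = j := by
      intro k l hkl hk hl i j hi hj e1 e2
      simp only [ht_def] at e1 e2
      lift γ i to Γ using hγtop i hi with gi hgi
      lift γ j to Γ using hγtop j hj with gj hgj
      lift val (g.coeff k) to Γ using hval.ne_top hk with ck hck
      lift val (g.coeff l) to Γ using hval.ne_top hl with cl hcl
      rw [aux_coe_nsmul, aux_coe_nsmul] at e1 e2
      have e1' : ck + k • gi = cl + l • gi := by exact_mod_cast e1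
      have e2' : ck + k • gj = cl + l • gj := by exact_mod_cast e2
      have hlk : l - k + k = l := Nat.sub_add_cancel hkl.le
      have f1 : ck = cl + (l - k) • gi := by
        have e3 : ck + k • gi = (cl + (l - k) • gi) + k • gi := by
          rw [add_assoc, ← add_nsmul, hlk]; exact e1'
        exact add_right_cancel e3
      have f2 : ck = cl + (l - k) • gj := by
        have e3 : ck + k • gj = (cl + (l - k) • gj) + k • gj := by
          rw [add_assoc, ← add_nsmul, hlk]; exact e2'
        exact add_right_cancel e3
      have f3 : (l - k) • gi = (l - k) • gj := add_left_cancel (f1 ▸ f2)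
      have : gi = gj := aux_nsmul_inj (by omega) f3
      exact hγinj i j hi hj (by rw [← hgi, ← hgj, this])
    intro k l hkl hk hl i j hi hj e1 e2
    rcases Nat.lt_or_ge k l with hc | hc
    · exact aux k l hc hk hl i j hi hj e1 e2
    · exact aux l k (by omega) hl hk i j hi hj e1.symm e2.symm
  -- the threshold ordinal
  set idx : ℕ × ℕ → Ordinal := fun p =>
    if hp : ∃ i, i < lam ∧ tval p.1 i = tval p.2 i then hp.choose else 0 with hidx_def
  have hidx_lt : ∀ p, idx p < lam := by
    intro p
    rw [hidx_def]
    dsimp only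
    split
    · next hp => exact hp.choose_spec.1
    · exact hlam.pos
  set ν := (S ×ˢ S).sup idx with hν_def
  have hν : ν < lam := by
    rw [hν_def]
    rw [Finset.sup_lt_iff (by rw [Ordinal.bot_eq_zero]; exact hlam.pos)]
    exact fun p _ => hidx_lt p
  have hnotie : ∀ i, ν < i → i < lam → ∀ k ∈ S, ∀ l ∈ S, k ≠ l → tval k i ≠ tval l i := by
    intro i hνi hi k hk l hl hkl he
    have hex : ∃ i', i' < lam ∧ tval k i' = tval l i' := ⟨i, hi, he⟩
    have hidx_eq : idx (k, l) = hex.choose := by rw [hidx_def]; exact dif_pos hex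
    have hspec := hex.choose_spec
    have hkc : g.coeff k ≠ 0 := ((hSmem k).mp hk).2.1
    have hlc : g.coeff l ≠ 0 := ((hSmem l).mp hl).2.1
    have : hex.choose = i := key k l hkl hkc hlc _ i hspec.1 hi hspec.2 he
    have hle : idx (k, l) ≤ ν := Finset.le_sup (Finset.mem_product.mpr ⟨hk, hl⟩)
    rw [hidx_eq, this] at hle
    exact absurd (lt_of_le_of_lt hle hνi) (lt_irrefl i)
  have hmin' : ∀ i, ν < i → i < lam → ∃ k0 ∈ S,
      val (h.eval (v i)) = tval k0 i ∧ ∀ k ∈ S, tval k0 i ≤ tval k i := by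
    intro i hνi hi
    obtain ⟨k0, hk0S, hk0min⟩ := Finset.exists_min_image S (fun k => tval k i) ⟨d, hdS⟩
    refine ⟨k0, hk0S, ?_, hk0min⟩
    rw [heval i hi, hval.map_sum hk0S ?_ ?_, hterm k0 i hi]
    · exact mul_ne_zero ((hSmem k0).mp hk0S).2.1 (pow_ne_zero _ (hvix i hi))
    · intro k hkS hkne
      rw [hterm k i hi, hterm k0 i hi]
      exact lt_of_le_of_ne (hk0min k hkS) (hnotie i hνi hi k0 hk0S k hkS (Ne.symm hkne))
  have htmono : ∀ k ∈ S, ∀ i j : Ordinal, i < j → i < lam → j < lam →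
      tval k i < tval k j := by
    intro k hkS i j hij hi hj
    have hk1 : 1 ≤ k := ((hSmem k).mp hkS).2.2
    have hkc : g.coeff k ≠ 0 := ((hSmem k).mp hkS).2.1
    simp only [ht_def]
    lift val (g.coeff k) to Γ using hval.ne_top hkc with c hc
    lift γ i to Γ using hγtop i hi with gi hgi
    lift γ j to Γ using hγtop j hj with gj hgj
    have hgij : gi < gj := by
      have h4 := hγmono i j hij hj
      rw [← hgi, ← hgj] at h4
      exact_mod_cast h4
    rw [aux_coe_nsmul, aux_coe_nsmul]
    exact_mod_cast add_lt_add_right (aux_nsmul_lt hgij k (by omega)) c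
  refine ⟨ν, hν, ?_⟩
  intro i j hνi hij hj
  have hi : i < lam := hij.trans hj
  obtain ⟨ki, hkiS, hei, hmi⟩ := hmin' i hνi hi
  obtain ⟨kj, hkjS, hej, _⟩ := hmin' j (hνi.trans hij) hj
  rw [hei, hej]
  calc tval ki i ≤ tval kj i := hmi kj hkjS
  _ < tval kj j := htmono kj hkjS i j hij hi hj
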